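/- Let g : ℝⁿ → ℝ be convex, μ > 0, p ≥ 1. Suppose λ* ≠ 0 is a global minimizer of φ(λ) = g(λ) + (μ/(1+1/p))·‖λ‖^{1+1/p}, let λᵏ ∈ ℝⁿ with 0 < ‖λᵏ‖ ≤ ‖λ*‖ and λᵏ⁺¹ ≠ λ*, and let λᵏ⁺¹ be a global minimizer of λ ↦ g(λ) + (μ/2)·‖λᵏ‖^{(1/p)−1}·‖λ‖². Then ‖λᵏ‖^{1−1/p}·‖λ*‖^{1/p} ≤ ‖λᵏ⁺¹‖. -/

import Mathlib

/-- If `0 < ‖λᵏ‖ ≤ ‖λ*‖` and `λᵏ⁺¹ ≠ λ*`, one step of the fixed point iteration satisfies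
`‖λᵏ‖^{1−1/p}‖λ*‖^{1/p} ≤ ‖λᵏ⁺¹‖`. -/
theorem fixed_point_iteration_contraction_below
    (n : ℕ) (g : EuclideanSpace ℝ (Fin n) → ℝ)
    (hg : ConvexOn ℝ Set.univ g) (μ p : ℝ) (hμ : 0 < μ) (hp : 1 ≤ p)
    (lamstar : EuclideanSpace ℝ (Fin n)) (hstar0 : lamstar ≠ 0)
    (hstar : ∀ z : EuclideanSpace ℝ (Fin n),
      g lamstar + μ / (1 + 1 / p) * ‖lamstar‖ ^ (1 + 1 / p) ≤
        g z + μ / (1 + 1 / p) * ‖z‖ ^ (1 + 1 / p))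
    (lamk lamk1 : EuclideanSpace ℝ (Fin n))
    (hk0 : 0 < ‖lamk‖) (hk : ‖lamk‖ ≤ ‖lamstar‖) (hne : lamk1 ≠ lamstar)
    (hmin : ∀ z : EuclideanSpace ℝ (Fin n),
      g lamk1 + μ / 2 * ‖lamk‖ ^ (1 / p - 1) * ‖lamk1‖ ^ 2 ≤
        g z + μ / 2 * ‖lamk‖ ^ (1 / p - 1) * ‖z‖ ^ 2) :
    ‖lamk‖ ^ (1 - 1 / p) * ‖lamstar‖ ^ (1 / p) ≤ ‖lamk1‖ := by
  set a := ‖lamk‖ with ha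
  set s := ‖lamstar‖ with hsdef
  set b := ‖lamk1‖ with hbdef
  have hs : 0 < s := lt_of_lt_of_le hk0 hk
  have hb : (0:ℝ) ≤ b := norm_nonneg _
  have hp0 : 0 < p := lt_of_lt_of_le one_pos hp
  have hp1 : 0 < 1/p := by positivity
  have hp1' : 1/p ≤ 1 := by
    rw [div_le_one hp0]; exact hp
  have hq : (0:ℝ) < 1 + 1/p := by positivity
  by_cases hbs : s ≤ b
  · calc a ^ (1-1/p) * s ^ (1/p)
        ≤ s ^ (1-1/p) * s ^ (1/p) := by
          have := Real.rpow_le_rpow hk0.le hk (by linarith : (0:ℝ) ≤ 1 - 1/p)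
          have h2 : (0:ℝ) ≤ s ^ (1/p) := Real.rpow_nonneg hs.le _
          nlinarith
      _ = s := by
          rw [← Real.rpow_add hs]; norm_num
      _ ≤ b := hbs
  · push_neg at hbs
    -- main case: b < s
    set C := μ/2 * a ^ (1/p - 1) with hC
    set K := μ/(1 + 1/p) with hK
    have hC0 : 0 < C := by
      have := Real.rpow_pos_of_pos hk0 (1/p - 1); positivity
    have hK0 : 0 < K := by positivity
    have key : ∀ t ∈ Set.Ioc (0:ℝ) 1,
        0 ≤ C * ((b + t*(s-b))^2 - b^2)
          + K * ((s + t*(b-s)) ^ (1+1/p) - s ^ (1+1/p)) := by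
      rintro t ⟨ht0, ht1⟩
      set x := (1-t) • lamk1 + t • lamstar with hx
      set y := (1-t) • lamstar + t • lamk1 with hy
      have hgx : g x ≤ (1-t) * g lamk1 + t * g lamstar :=
        hg.2 (Set.mem_univ _) (Set.mem_univ _) (by linarith) ht0.le (by ring)
      have hgy : g y ≤ (1-t) * g lamstar + t * g lamk1 :=
        hg.2 (Set.mem_univ _) (Set.mem_univ _) (by linarith) ht0.le (by ring)
      have hnx : ‖x‖ ≤ b + t*(s-b) := by
        calc ‖x‖ ≤ ‖(1-t) • lamk1‖ + ‖t • lamstar‖ := norm_add_le _ _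
          _ = (1-t) * b + t * s := by
              rw [norm_smul, norm_smul, Real.norm_eq_abs, Real.norm_eq_abs,
                abs_of_nonneg (by linarith), abs_of_nonneg ht0.le]
          _ = b + t*(s-b) := by ring
      have hny : ‖y‖ ≤ s + t*(b-s) := by
        calc ‖y‖ ≤ ‖(1-t) • lamstar‖ + ‖t • lamk1‖ := norm_add_le _ _
          _ = (1-t) * s + t * b := by
              rw [norm_smul, norm_smul, Real.norm_eq_abs, Real.norm_eq_abs,
                abs_of_nonneg (by linarith), abs_of_nonneg ht0.le]
          _ = s + t*(b-s) := by ring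
      have hx2 : ‖x‖^2 ≤ (b + t*(s-b))^2 := by
        have h0 : (0:ℝ) ≤ ‖x‖ := norm_nonneg _
        nlinarith
      have hyq : ‖y‖ ^ (1+1/p) ≤ (s + t*(b-s)) ^ (1+1/p) :=
        Real.rpow_le_rpow (norm_nonneg _) hny hq.le
      have h1 := hmin x
      have h2 := hstar y
      have e1 : g lamk1 + C * b^2 ≤ (1-t) * g lamk1 + t * g lamstar
          + C * (b + t*(s-b))^2 := by
        calc g lamk1 + C * b^2 ≤ g x + C * ‖x‖^2 := h1
          _ ≤ (1-t) * g lamk1 + t * g lamstar + C * (b + t*(s-b))^2 := by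
              have := mul_le_mul_of_nonneg_left hx2 hC0.le
              linarith
      have e2 : g lamstar + K * s ^ (1+1/p) ≤ (1-t) * g lamstar + t * g lamk1
          + K * (s + t*(b-s)) ^ (1+1/p) := by
        calc g lamstar + K * s ^ (1+1/p) ≤ g y + K * ‖y‖ ^ (1+1/p) := h2
          _ ≤ _ := by
              have := mul_le_mul_of_nonneg_left hyq hK0.le
              linarith
      linarith [e1, e2]
    -- the auxiliary function and its derivative at 0
    set h : ℝ → ℝ := fun t => C * ((b + t*(s-b))^2 - b^2)
      + K * ((s + t*(b-s)) ^ (1+1/p) - s ^ (1+1/p)) with hh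
    have hh0 : h 0 = 0 := by
      simp [hh, Real.rpow_natCast]
    set L : ℝ := C * (2*b*(s-b)) + K * ((b-s) * (1+1/p) * s ^ (1/p)) with hL
    have hder : HasDerivAt h L 0 := by
      have d1 : HasDerivAt (fun t : ℝ => b + t*(s-b)) (s-b) 0 := by
        simpa using ((hasDerivAt_id (0:ℝ)).mul_const (s-b)).const_add b
      have d2 : HasDerivAt (fun t : ℝ => (b + t*(s-b))^2 - b^2)
          (2*b*(s-b)) 0 := by
        have := (d1.pow 2).sub_const (b^2)
        simpa using this
      have d3 : HasDerivAt (fun t : ℝ => s + t*(b-s)) (b-s) 0 := by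
        simpa using ((hasDerivAt_id (0:ℝ)).mul_const (b-s)).const_add s
      have d4 : HasDerivAt (fun t : ℝ => (s + t*(b-s)) ^ (1+1/p) - s ^ (1+1/p))
          ((b-s) * (1+1/p) * s ^ (1/p)) 0 := by
        have hne0 : (s + (0:ℝ)*(b-s)) ≠ 0 := by norm_num; linarith
        have hd := (d3.rpow_const (p := 1+1/p) (Or.inl hne0)).sub_const (s ^ (1+1/p))
        have e1 : s + (0:ℝ)*(b-s) = s := by ring
        have e2 : (1 + 1/p - 1) = 1/p := by ring
        rw [e1, e2] at hd
        exact hd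
      exact (d2.const_mul C).add (d4.const_mul K)
    have hL0 : 0 ≤ L := by
      have hslope : Filter.Tendsto (slope h 0) (nhdsWithin 0 {(0:ℝ)}ᶜ) (nhds L) :=
        hasDerivAt_iff_tendsto_slope.mp hder
      have hslope' : Filter.Tendsto (slope h 0) (nhdsWithin 0 (Set.Ioi 0)) (nhds L) :=
        hslope.mono_left (nhdsWithin_mono _ (fun t ht => ne_of_gt ht))
      have hev : ∀ᶠ t in nhdsWithin (0:ℝ) (Set.Ioi 0), 0 ≤ slope h 0 t := by
        filter_upwards [Ioc_mem_nhdsGT_of_mem (Set.mem_Ico.mpr ⟨le_refl _, one_pos⟩)]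
          with t ht
        have hkey := key t ht
        have ht0 : 0 < t := ht.1
        have hsl : slope h 0 t = h t / t := by
          rw [slope_def_field, hh0, sub_zero, sub_zero]
        rw [hsl]
        exact div_nonneg hkey ht0.le
      exact ge_of_tendsto hslope' hev
    -- unfold L and conclude
    have hmain : μ * s ^ (1/p) ≤ μ * a ^ (1/p - 1) * b := by
      have hKq : K * (1 + 1/p) = μ := by
        rw [hK, div_mul_cancel₀ _ hq.ne']
      have hsb : 0 < s - b := by linarith
      have hL' : 0 ≤ (s - b) * (μ * a ^ (1/p-1) * b - μ * s ^ (1/p)) := by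
        have : L = (s - b) * (μ * a ^ (1/p-1) * b - μ * s ^ (1/p)) := by
          rw [hL, hC]
          have : K * ((b-s) * (1+1/p) * s ^ (1/p)) = (K * (1+1/p)) * ((b-s) * s ^ (1/p)) := by
            ring
          rw [this, hKq]; ring
        linarith [this ▸ hL0]
      nlinarith
    have hS : 0 ≤ s ^ (1/p) := Real.rpow_nonneg hs.le _
    have h2 : s ^ (1/p) ≤ a ^ (1/p - 1) * b := by
      have h' := hmain
      rw [mul_assoc] at h'
      exact (mul_le_mul_iff_right₀ hμ).mp h'
    have hA : 0 < a ^ (1 - 1/p) := Real.rpow_pos_of_pos hk0 _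
    have hAA : a ^ (1 - 1/p) * a ^ (1/p - 1) = 1 := by
      rw [← Real.rpow_add hk0]
      norm_num
    calc a ^ (1-1/p) * s ^ (1/p) ≤ a ^ (1-1/p) * (a ^ (1/p-1) * b) :=
          mul_le_mul_of_nonneg_left h2 hA.le
      _ = (a ^ (1-1/p) * a ^ (1/p-1)) * b := by ring
      _ = b := by rw [hAA, one_mul]
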